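/- Let X be a regular topological space, and let r : Y → Z be a continuous surjective open map between topological spaces. Then the image of the induced map r_* : Q_P(X,Y) → Q_P(X,Z), defined by r_*(f) = r ∘ f, is dense in Q_P(X,Z). -/
import Mathlib


open Cardinal

universe u v w

/-- A function between topological spaces is quasi-continuous if for every point `x` and
all open sets `U ∋ x` and `V ∋ f x` there is a nonempty open `G ⊆ U` with `f '' G ⊆ V`. -/
def QuasiContinuous {X Y : Type*} [TopologicalSpace X] [TopologicalSpace Y] (f : X → Y) : Prop :=
  ∀ x : X, ∀ U : Set X, IsOpen U → x ∈ U → ∀ V : Set Y, IsOpen V → f x ∈ V →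
    ∃ G : Set X, IsOpen G ∧ G.Nonempty ∧ G ⊆ U ∧ f '' G ⊆ V

/-- `QP X Y` : the quasi-continuous functions from `X` to `Y`, topologized as a subspace of
the product topology on `X → Y` (topology of pointwise convergence). -/
abbrev QP (X Y : Type*) [TopologicalSpace X] [TopologicalSpace Y] :=
  {f : X → Y // QuasiContinuous f}

/-- `CP X Y` : the continuous functions from `X` to `Y` with the topology of
pointwise convergence. -/
abbrev CP (X Y : Type*) [TopologicalSpace X] [TopologicalSpace Y] :=
  {f : X → Y // Continuous f}

/-- The weight of a topological space: `ℵ₀ +` the least cardinality of a basis. -/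
noncomputable def weight (Z : Type u) [TopologicalSpace Z] : Cardinal.{u} :=
  ℵ₀ + sInf {c | ∃ B : Set (Set Z), TopologicalSpace.IsTopologicalBasis B ∧ #B = c}

/-- A network of a space: a family of (arbitrary) subsets such that every open `U ∋ z`
contains some member of the family containing `z`. -/
def IsNetwork {Z : Type u} [TopologicalSpace Z] (N : Set (Set Z)) : Prop :=
  ∀ z : Z, ∀ U : Set Z, IsOpen U → z ∈ U → ∃ A ∈ N, z ∈ A ∧ A ⊆ U

/-- Network weight: `ℵ₀ +` the least cardinality of a network. -/
noncomputable def netWeight (Z : Type u) [TopologicalSpace Z] : Cardinal.{u} :=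
  ℵ₀ + sInf {c | ∃ N : Set (Set Z), IsNetwork N ∧ #N = c}

/-- Density: `ℵ₀ +` the least cardinality of a dense subset. -/
noncomputable def density (Z : Type u) [TopologicalSpace Z] : Cardinal.{u} :=
  ℵ₀ + sInf {c | ∃ D : Set Z, Dense D ∧ #D = c}

/-- Lindelöf degree: `ℵ₀ +` the least cardinal `η` such that every open cover has a
subcover of cardinality at most `η`. -/
noncomputable def lindelofDegree (X : Type u) [TopologicalSpace X] : Cardinal.{u} :=
  ℵ₀ + sInf {η | ∀ V : Set (Set X), (∀ U ∈ V, IsOpen U) → ⋃₀ V = Set.univ →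
      ∃ W ⊆ V, #W ≤ η ∧ ⋃₀ W = Set.univ}

/-- Tightness: `ℵ₀ +` the least cardinal `η` such that whenever `z ∈ closure A` there is
`B ⊆ A` with `#B ≤ η` and `z ∈ closure B`. -/
noncomputable def tightness (Z : Type u) [TopologicalSpace Z] : Cardinal.{u} :=
  ℵ₀ + sInf {η | ∀ z : Z, ∀ A : Set Z, z ∈ closure A →
      ∃ B ⊆ A, #B ≤ η ∧ z ∈ closure B}

/-- Pseudocharacter of a space: the sup over points `z` of `ℵ₀ +` the least cardinality of a
family of open sets whose intersection is `{z}`. -/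
noncomputable def pseudoChar (Z : Type u) [TopologicalSpace Z] : Cardinal.{u} :=
  ⨆ z : Z, (ℵ₀ + sInf {c | ∃ γ : Set (Set Z), (∀ U ∈ γ, IsOpen U) ∧ ⋂₀ γ = {z} ∧ #γ = c})

/-- Weak covering number: `ℵ₀ +` the least cardinality of a family of open sets whose union
is dense. -/
noncomputable def weakCov (X : Type u) [TopologicalSpace X] : Cardinal.{u} :=
  ℵ₀ + sInf {c | ∃ J : Set (Set X), (∀ U ∈ J, IsOpen U) ∧ closure (⋃₀ J) = Set.univ ∧ #J = c}

/-- Cardinal logarithm: the least `μ` with `κ ≤ 2 ^ μ`. -/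
noncomputable def cardLog (κ : Cardinal.{u}) : Cardinal.{u} :=
  sInf {μ | κ ≤ 2 ^ μ}

/-- i-weight: `ℵ₀ +` the least weight of a space onto which `Z` admits a continuous
bijection. -/
noncomputable def iWeight (Z : Type u) [TopologicalSpace Z] : Cardinal.{u} :=
  ℵ₀ + sInf {c | ∃ (W : Type u) (_ : TopologicalSpace W) (f : Z → W),
      Continuous f ∧ Function.Bijective f ∧ weight W = c}

/-- For a regular space `X` and a continuous surjective open map `r : Y → Z`,
the image of the induced map `r_* : Q_P(X,Y) → Q_P(X,Z)`, `r_* f = r ∘ f`, is dense in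
`Q_P(X,Z)`. -/


lemma quasi_comp {X Y Z : Type*} [TopologicalSpace X] [TopologicalSpace Y] [TopologicalSpace Z]
    {f : X → Y} {r : Y → Z} (hf : QuasiContinuous f) (hr : Continuous r) :
    QuasiContinuous (r ∘ f) := by
  intro x U hU hxU V hV hxV
  obtain ⟨G, hGo, hGne, hGU, hGV⟩ := hf x U hU hxU (r ⁻¹' V) (hV.preimage hr) hxV
  refine ⟨G, hGo, hGne, hGU, ?_⟩
  rintro _ ⟨t, ht, rfl⟩
  exact hGV ⟨t, ht, rfl⟩

lemma key_lemma {X : Type*} {Y : Type*} {Z : Type*} [TopologicalSpace X] [TopologicalSpace Y]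
    [TopologicalSpace Z] (r : Y → Z) (hsurj : Function.Surjective r)
    (g : X → Z) (hg : QuasiContinuous g) (I : Finset X) (V : X → Set Z)
    (hV : ∀ i ∈ I, IsOpen (V i) ∧ g i ∈ V i) :
    ∃ f : X → Y, QuasiContinuous f ∧ ∀ i ∈ I, r (f i) ∈ V i := by
  classical
  by_cases hX : Nonempty X
  case neg =>
    exact ⟨fun x => (hX ⟨x⟩).elim, fun x => (hX ⟨x⟩).elim, fun i hi => (hX ⟨i⟩).elim⟩
  obtain ⟨x0⟩ := hX
  set Oi : X → Set X := fun i => interior (g ⁻¹' (V i)) with hOidef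
  set O : Finset X → Set X := fun S => ⋂ i ∈ S, Oi i with hOdef
  have hOopen : ∀ S, IsOpen (O S) := fun S => isOpen_biInter_finset fun i _ => isOpen_interior
  have hOmem : ∀ (S : Finset X) (x : X), x ∈ O S ↔ ∀ i ∈ S, x ∈ Oi i := fun S x => Set.mem_iInter₂
  -- helper: open set ∩ closure
  have hclinter : ∀ (x : X) (s t : Set X), IsOpen s → x ∈ s → x ∈ closure t →
      x ∈ closure (s ∩ t) := by
    intro x s t hs hxs hxt
    rw [mem_closure_iff] at hxt ⊢
    intro o ho hxo
    obtain ⟨p, hp, hpt⟩ := hxt (o ∩ s) (ho.inter hs) ⟨hxo, hxs⟩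
    exact ⟨p, hp.1, hp.2, hpt⟩
  set Sx : X → Finset X := fun x => I.filter (fun i => x ∈ Oi i) with hSxdef
  set Jx : X → Finset X := fun x => I.filter (fun i => i = x) with hJxdef
  set R : X → Finset X := fun x => Sx x ∪ Jx x with hRdef
  have hRI : ∀ x, R x ⊆ I := fun x =>
    Finset.union_subset (Finset.filter_subset _ _) (Finset.filter_subset _ _)
  have hxOSx : ∀ x, x ∈ O (Sx x) := fun x => (hOmem _ x).2 fun i hi => (Finset.mem_filter.1 hi).2
  have hclR : ∀ x, x ∈ closure (O (R x)) := by
    intro x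
    rw [mem_closure_iff]
    intro W hW hxW
    have hUo : IsOpen (W ∩ O (Sx x)) := hW.inter (hOopen _)
    have hxU : x ∈ W ∩ O (Sx x) := ⟨hxW, hxOSx x⟩
    have hV'o : IsOpen (⋂ i ∈ Jx x, V i) :=
      isOpen_biInter_finset fun i hi => (hV i (Finset.mem_filter.1 hi).1).1
    have hgxV' : g x ∈ ⋂ i ∈ Jx x, V i := Set.mem_iInter₂.2 fun i hi => by
      obtain ⟨hiI, hix⟩ := Finset.mem_filter.1 hi
      subst hix
      exact (hV i hiI).2
    obtain ⟨G, hGo, hGne, hGU, hGV⟩ := hg x (W ∩ O (Sx x)) hUo hxU _ hV'o hgxV'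
    obtain ⟨p, hp⟩ := hGne
    refine ⟨p, (hGU hp).1, ?_⟩
    rw [hOmem]
    intro i hi
    rcases Finset.mem_union.1 hi with hiS | hiJ
    · exact (hOmem _ p).1 (hGU hp).2 i hiS
    · have hGsub : G ⊆ g ⁻¹' (V i) := by
        intro q hq
        exact Set.mem_iInter₂.1 (hGV ⟨q, hq, rfl⟩) i hiJ
      exact interior_maximal hGsub hGo hp
  set F : X → Finset (Finset X) :=
    fun x => I.powerset.filter (fun S => R x ⊆ S ∧ x ∈ closure (O S)) with hFdef
  have hFne : ∀ x, (F x).Nonempty := fun x =>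
    ⟨R x, Finset.mem_filter.2 ⟨Finset.mem_powerset.2 (hRI x), Finset.Subset.refl _, hclR x⟩⟩
  have hM : ∀ x, ∃ S ∈ F x, ∀ T ∈ F x, T.card ≤ S.card :=
    fun x => Finset.exists_max_image (F x) Finset.card (hFne x)
  choose M hMF hMmax using hM
  have hMI : ∀ x, M x ⊆ I := fun x => Finset.mem_powerset.1 (Finset.mem_filter.1 (hMF x)).1
  have hRM : ∀ x, R x ⊆ M x := fun x => (Finset.mem_filter.1 (hMF x)).2.1
  have hMcl : ∀ x, x ∈ closure (O (M x)) := fun x => (Finset.mem_filter.1 (hMF x)).2.2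
  have hmaxl : ∀ x S, S ⊆ I → M x ⊂ S → x ∉ closure (O S) := by
    intro x S hSI hMS hcl
    have hSF : S ∈ F x :=
      Finset.mem_filter.2 ⟨Finset.mem_powerset.2 hSI, (hRM x).trans hMS.subset, hcl⟩
    exact absurd (Finset.card_lt_card hMS) (not_lt.2 (hMmax x S hSF))
  have hOne : ∀ x, (O (M x)).Nonempty := by
    intro x
    by_contra h
    rw [Set.not_nonempty_iff_eq_empty] at h
    have := hMcl x
    rw [h, closure_empty] at this
    exact this
  set y : Finset X → Y :=
    fun S => if h : (O S).Nonempty then (hsurj (g h.choose)).choose else (hsurj (g x0)).choose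
    with hydef
  have hy : ∀ (S : Finset X) (h : (O S).Nonempty), ∀ i ∈ S, r (y S) ∈ V i := by
    intro S h i hi
    have h2 : r (y S) = g h.choose := by
      rw [hydef]; simp only [dif_pos h]; exact (hsurj (g h.choose)).choose_spec
    rw [h2]
    have hch : h.choose ∈ Oi i := (hOmem S h.choose).1 h.choose_spec i hi
    have : h.choose ∈ g ⁻¹' (V i) := interior_subset hch
    exact this
  refine ⟨fun x => y (M x), ?_, ?_⟩
  · -- quasi-continuity
    intro x U hU hxU V' hV' hxV'
    set Bad : Finset (Finset X) := I.powerset.filter (fun S => M x ⊂ S) with hBaddef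
    set U' : Set X := U ∩ ⋂ S ∈ Bad, (closure (O S))ᶜ with hU'def
    have hU'o : IsOpen U' :=
      hU.inter (isOpen_biInter_finset fun S _ => isOpen_compl_iff.2 isClosed_closure)
    have hxU' : x ∈ U' := by
      refine ⟨hxU, Set.mem_iInter₂.2 fun S hS => ?_⟩
      obtain ⟨hSp, hMS⟩ := Finset.mem_filter.1 hS
      exact hmaxl x S (Finset.mem_powerset.1 hSp) hMS
    have hGne : (U' ∩ O (M x)).Nonempty := mem_closure_iff.1 (hMcl x) U' hU'o hxU'
    refine ⟨U' ∩ O (M x), hU'o.inter (hOopen _), hGne, fun p hp => hp.1.1, ?_⟩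
    rintro _ ⟨x', hx', rfl⟩
    have hx'O : x' ∈ O (M x) := hx'.2
    have hnotcl : ∀ S, S ⊆ I → M x ⊂ S → x' ∉ closure (O S) := by
      intro S hSI hMS
      have hSB : S ∈ Bad := Finset.mem_filter.2 ⟨Finset.mem_powerset.2 hSI, hMS⟩
      exact Set.mem_iInter₂.1 hx'.1.2 S hSB
    have hOunion : ∀ T : Finset X, O (M x ∪ T) = O (M x) ∩ O T := by
      intro T
      ext q
      rw [Set.mem_inter_iff, hOmem, hOmem, hOmem]
      constructor
      · intro h
        exact ⟨fun i hi => h i (Finset.mem_union_left _ hi),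
               fun i hi => h i (Finset.mem_union_right _ hi)⟩
      · intro h i hi
        rcases Finset.mem_union.1 hi with h1 | h1
        exacts [h.1 i h1, h.2 i h1]
    have hsub : ∀ T : Finset X, T ⊆ I → x' ∈ closure (O T) → T ⊆ M x := by
      intro T hTI hTcl
      by_contra hTM
      have hcl2 : x' ∈ closure (O (M x ∪ T)) := by
        rw [hOunion]
        exact hclinter x' _ _ (hOopen (M x)) hx'O hTcl
      have hss : M x ⊂ M x ∪ T := by
        rw [Finset.ssubset_iff_subset_ne]
        refine ⟨Finset.subset_union_left, fun h => hTM ?_⟩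
        intro t ht
        have : t ∈ M x ∪ T := Finset.mem_union_right _ ht
        rwa [← h] at this
      exact hnotcl _ (Finset.union_subset (hMI x) hTI) hss hcl2
    have hRsub : R x' ⊆ M x := hsub (R x') (hRI x') (hclR x')
    have hMx'sub : M x' ⊆ M x := hsub (M x') (hMI x') (hMcl x')
    have hMxF' : M x ∈ F x' :=
      Finset.mem_filter.2 ⟨Finset.mem_powerset.2 (hMI x), hRsub, subset_closure hx'O⟩
    have heq : M x' = M x := Finset.eq_of_subset_of_card_le hMx'sub (hMmax x' (M x) hMxF')
    show y (M x') ∈ V'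
    rw [heq]
    exact hxV'
  · -- values
    intro i hi
    have hiR : i ∈ R i := Finset.mem_union_right _ (Finset.mem_filter.2 ⟨hi, rfl⟩)
    exact hy (M i) (hOne i) i (hRM i hiR)

theorem stmt13 (X : Type u) (Y : Type v) (Z : Type w) [TopologicalSpace X] [RegularSpace X]
    [TopologicalSpace Y] [TopologicalSpace Z] (r : Y → Z) (hr : Continuous r)
    (hsurj : Function.Surjective r) (hopen : IsOpenMap r) :
    Dense {g : QP X Z | ∃ f : QP X Y, (g : X → Z) = r ∘ (f : X → Y)} := by
  rw [dense_iff_inter_open]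
  rintro U hU ⟨g₀, hg₀⟩
  obtain ⟨T, hT, rfl⟩ := isOpen_induced_iff.mp hU
  have hg₀T : (g₀ : X → Z) ∈ T := hg₀
  obtain ⟨I, V, h1, h2⟩ := isOpen_pi_iff.mp hT g₀.1 hg₀T
  obtain ⟨f, hfqc, hfV⟩ := key_lemma r hsurj g₀.1 g₀.2 I V h1
  refine ⟨⟨r ∘ f, quasi_comp hfqc hr⟩, ?_, ⟨f, hfqc⟩, rfl⟩
  exact h2 (Set.mem_pi.2 fun i hi => hfV i (Finset.mem_coe.1 hi))
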